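/- Let P be a fixed directed s-t path in G and let G' be the graph obtained from G by removing the edges of P and adding the reverse of each edge of P. If e = (u,v) is an edge of P that is NOT an s-t bridge of G, and u is reachable from s in G', then v is reachable from s in G'. -/

import Mathlib

variable {V : Type*}

/-- Reachability via directed edges of relation `E`. -/
def reaches (E : V → V → Prop) : V → V → Prop := Relation.ReflTransGen E

/-- The graph with the single edge `e` deleted. -/
def eraseEdge (E : V → V → Prop) (e : V × V) : V → V → Prop :=
  fun a b => E a b ∧ (a, b) ≠ e

/-- `e` is an `s`-`t` bridge: it is an edge and its removal destroys all `s`-`t` paths. -/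
def IsBridge (E : V → V → Prop) (s t : V) (e : V × V) : Prop :=
  E e.1 e.2 ∧ ¬ reaches (eraseEdge E e) s t

/-- A directed walk from `s` to `t` whose successive vertices after `s` are `p`. -/
def IsWalk (E : V → V → Prop) (s t : V) (p : List V) : Prop :=
  List.Chain E s p ∧ (s :: p).getLast (List.cons_ne_nil s p) = t

/-- The list of edges of the walk `s :: p`. -/
def edgesOf (s : V) (p : List V) : List (V × V) := (s :: p).zip p

/-- The transformed graph `(G \ P) ∪ P⁻¹`: edges of the walk `s :: p` are reversed. -/
def transE (E : V → V → Prop) (s : V) (p : List V) : V → V → Prop :=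
  fun a b => (E a b ∧ (a, b) ∉ edgesOf s p) ∨ (b, a) ∈ edgesOf s p

lemma mem_edgesOf_iff {s a b : V} {p : List V} :
    (a, b) ∈ edgesOf s p ↔ ∃ i, (s :: p)[i]? = some a ∧ (s :: p)[i+1]? = some b := by
  unfold edgesOf
  constructor
  · intro h
    obtain ⟨i, hi, hget⟩ := List.mem_iff_getElem.mp h
    have hi' : i < p.length := by
      simpa using lt_of_lt_of_le hi (by simp [List.length_zip])
    refine ⟨i, ?_, ?_⟩
    · rw [List.getElem?_eq_getElem (by simp; omega)]
      rw [List.getElem_zip] at hget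
      simp [Prod.ext_iff] at hget
      simp [hget.1]
    · rw [List.getElem?_cons_succ, List.getElem?_eq_getElem hi']
      rw [List.getElem_zip] at hget
      simp [Prod.ext_iff] at hget
      simp [hget.2]
  · rintro ⟨i, ha, hb⟩
    rw [List.getElem?_cons_succ] at hb
    have hi' : i < p.length := by
      by_contra h
      rw [List.getElem?_eq_none (by omega)] at hb
      simp at hb
    have hlen : i < ((s :: p).zip p).length := by simp [List.length_zip]; omega
    rw [List.getElem?_eq_getElem (by simp; omega)] at ha
    rw [List.getElem?_eq_getElem hi'] at hb
    refine List.mem_iff_getElem.mpr ⟨i, hlen, ?_⟩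
    rw [List.getElem_zip]
    simp at ha hb
    simp [ha, hb]

lemma chain_edges : ∀ {s : V} {p : List V} {E : V → V → Prop}, List.Chain E s p →
    ∀ a b, (a, b) ∈ edgesOf s p → E a b := by
  intro s p
  induction p generalizing s with
  | nil => intro E h a b hm; simp [edgesOf] at hm
  | cons c q ih =>
    intro E h a b hm
    replace h : E s c ∧ List.Chain E c q := List.isChain_cons_cons.mp h
    have : edgesOf s (c :: q) = (s, c) :: edgesOf c q := by simp [edgesOf]
    rw [this, List.mem_cons] at hm
    rcases hm with hm | hm
    · simp only [Prod.mk.injEq] at hm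
      obtain ⟨rfl, rfl⟩ := hm
      exact h.1
    · exact ih h.2 a b hm

lemma down_closed {s : V} {p : List V} (R : V → Prop)
    (hrev : ∀ a b : V, (a, b) ∈ edgesOf s p → R b → R a) :
    ∀ (m i : ℕ) (x y : V), (s :: p)[i]? = some x → (s :: p)[i + m]? = some y → R y → R x := by
  intro m
  induction m with
  | zero =>
    intro i x y hx hy hR
    simp only [Nat.add_zero] at hy
    rw [hx] at hy; cases hy; exact hR
  | succ m ih =>
    intro i x y hx hy hR
    have hlt : i + m + 1 < (s :: p).length := by
      by_contra h
      rw [show i + (m+1) = i + m + 1 by ring, List.getElem?_eq_none (by omega)] at hy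
      simp at hy
    have hz : (s :: p)[i + m]? = some ((s :: p)[i + m]'(by omega)) :=
      List.getElem?_eq_getElem (by omega)
    refine ih i x _ hx hz ?_
    apply hrev _ y ?_ hR
    rw [mem_edgesOf_iff]
    exact ⟨i + m, hz, hy⟩

lemma cross {E' : V → V → Prop} (R : V → Prop) {s t : V}
    (hs : R s) (ht : ¬ R t) (h : Relation.ReflTransGen E' s t) :
    ∃ a b, E' a b ∧ R a ∧ ¬ R b := by
  induction h using Relation.ReflTransGen.head_induction_on with
  | refl => exact absurd hs ht
  | head hab _ ih =>
    rename_i a b _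
    by_cases hb : R b
    · exact ih hb
    · exact ⟨a, b, hab, hs, hb⟩

/-- if e = (u,v) is a non-bridge edge of P and u is reachable from s
in the transformed graph, then so is v. -/
theorem stmt5 (E : V → V → Prop) (s t : V) (p : List V) (hp : IsWalk E s t p)
    (e : V × V) (he : e ∈ edgesOf s p) (hnb : ¬ IsBridge E s t e)
    (hu : reaches (transE E s p) s e.1) :
    reaches (transE E s p) s e.2 := by
  by_contra hv
  set R : V → Prop := fun x => reaches (transE E s p) s x with hRdef
  have hrev : ∀ a b : V, (a, b) ∈ edgesOf s p → R b → R a := by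
    intro a b hab hb
    exact Relation.ReflTransGen.tail hb (Or.inr hab)
  -- e is an edge of E
  have hE : E e.1 e.2 := chain_edges hp.1 e.1 e.2 (by simpa using he)
  -- non-bridge gives an avoiding walk
  have hQ : reaches (eraseEdge E e) s t := by
    by_contra h
    exact hnb ⟨hE, h⟩
  -- index of e
  obtain ⟨k, hk1, hk2⟩ := mem_edgesOf_iff.mp (show (e.1, e.2) ∈ edgesOf s p by simpa using he)
  -- t is not reachable
  have hklt : k + 1 < (s :: p).length := by
    by_contra h
    rw [List.getElem?_eq_none (by omega)] at hk2
    simp at hk2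
  have htlast : (s :: p)[p.length]? = some t := by
    have := hp.2
    rw [List.getLast_eq_getElem] at this
    simp only [List.length_cons, Nat.add_sub_cancel] at this
    rw [List.getElem?_eq_getElem (by simp)]
    rw [this]
  have ht : ¬ R t := by
    intro hRt
    exact hv (down_closed R hrev (p.length - (k+1)) (k+1) e.2 t hk2
      (by rw [← htlast]; congr 1; simp at hklt; omega) hRt)
  -- crossing edge
  obtain ⟨a, b, ⟨hab, hne⟩, hRa, hRb⟩ := cross R Relation.ReflTransGen.refl ht hQ
  -- it must be a P-edge
  have hmem : (a, b) ∈ edgesOf s p := by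
    by_contra h
    exact hRb (Relation.ReflTransGen.tail hRa (Or.inl ⟨hab, h⟩))
  obtain ⟨i, hi1, hi2⟩ := mem_edgesOf_iff.mp hmem
  -- i ≤ k
  have hik : i ≤ k := by
    by_contra h
    exact hv (down_closed R hrev (i - (k+1)) (k+1) e.2 a hk2
      (by rw [← hi1]; congr 1; omega) hRa)
  have hki : k ≤ i := by
    by_contra h
    exact hRb (down_closed R hrev (k - (i+1)) (i+1) b e.1 hi2
      (by rw [← hk1]; congr 1; omega) hu)
  have hik' : i = k := le_antisymm hik hki
  subst hik'
  rw [hk1] at hi1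
  rw [hk2] at hi2
  cases hi1; cases hi2
  exact hne (Prod.ext rfl rfl)
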